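/- arXiv:2012.05404 — 2 statements merged into one kernel-verified Lean document; each statement's English description precedes it below -/
import Mathlib

section
/- Let 𝒜 be the family of elements Σ_{i=1}^{a₁} z_i ⊗ (p̃¹_{si}·z_j) ∈ V₁⊗V₂ for 1 ≤ j ≤ a₁ and 1 ≤ s ≤ a₁²−q₁₁. Then span_k 𝒜 ⊆ V₁ ⊗ (V₁·V₁), and dim_k(span_k 𝒜) + b = a₁q₁₁ (equivalently, b = a₁q₁₁ − dim_k span_k 𝒜). -/
open TensorProduct

set_option synthInstance.maxHeartbeats 1000000
set_option maxHeartbeats 1000000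

/-- The quotient of a module by a submodule, as a type (with its canonical instances). -/
def ModQuot {k M : Type*} [Field k] [AddCommGroup M] [Module k M]
    (S : Submodule k M) : Type _ := M ⧸ S

noncomputable instance ModQuot.instAddCommGroup {k M : Type*} [Field k] [AddCommGroup M]
    [Module k M] (S : Submodule k M) : AddCommGroup (ModQuot S) :=
  inferInstanceAs (AddCommGroup (M ⧸ S))

noncomputable instance ModQuot.instModule {k M : Type*} [Field k] [AddCommGroup M]
    [Module k M] (S : Submodule k M) : Module k (ModQuot S) :=
  inferInstanceAs (Module k (M ⧸ S))

/-- The `k`-dimension of a subspace of a `k`-vector space. -/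
noncomputable def SubmoduleDim {k M : Type*} [Field k] [AddCommGroup M] [Module k M]
    (S : Submodule k M) : ℕ := Module.finrank k ↥S

/-- Rank of a product map `(f, g)` with `f` surjective. -/
lemma aux_finrank_range_prod {k M C₁ C₂ : Type*} [Field k]
    [AddCommMonoid M] [Module k M] [AddCommGroup C₁] [Module k C₁]
    [AddCommGroup C₂] [Module k C₂]
    [Module.Finite k M] [FiniteDimensional k C₁] [FiniteDimensional k C₂]
    (f : M →ₗ[k] C₁) (g : M →ₗ[k] C₂) (hf : Function.Surjective f) :
    Module.finrank k ↥(LinearMap.range (f.prod g)) =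
      Module.finrank k C₁ + Module.finrank k ↥((LinearMap.ker f).map g) := by
  set P := LinearMap.range (f.prod g) with hP
  let π : ↥P →ₗ[k] C₁ := (LinearMap.fst k C₁ C₂) ∘ₗ P.subtype
  have hπsurj : Function.Surjective π := by
    intro u
    obtain ⟨x, hx⟩ := hf u
    exact ⟨⟨(f x, g x), ⟨x, rfl⟩⟩, hx⟩
  let e : ↥(LinearMap.ker π) →ₗ[k] C₂ :=
    (LinearMap.snd k C₁ C₂) ∘ₗ P.subtype ∘ₗ (LinearMap.ker π).subtype
  have hπval : ∀ a : ↥(LinearMap.ker π), (a : ↥P).1.1 = 0 := fun a => a.2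
  have heinj : Function.Injective e := by
    intro a b hab
    have h2 : (a : ↥P).1.2 = (b : ↥P).1.2 := hab
    have h1 : (a : ↥P).1.1 = (b : ↥P).1.1 := by rw [hπval a, hπval b]
    exact Subtype.ext (Subtype.ext (Prod.ext h1 h2))
  have hrange : LinearMap.range e = (LinearMap.ker f).map g := by
    ext v
    constructor
    · rintro ⟨a, rfl⟩
      obtain ⟨x, hx⟩ := (a : ↥P).2
      have hx1 : f x = (a : ↥P).1.1 := congrArg Prod.fst hx
      have hx2 : g x = (a : ↥P).1.2 := congrArg Prod.snd hx
      exact ⟨x, by show f x = 0; rw [hx1, hπval a], hx2⟩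
    · rintro ⟨x, hx, rfl⟩
      have hfx : f x = 0 := hx
      refine ⟨⟨⟨(f x, g x), ⟨x, rfl⟩⟩, ?_⟩, rfl⟩
      show π _ = 0
      simpa [π] using hfx
  have hrn := LinearMap.finrank_range_add_finrank_ker π
  have h2 : Module.finrank k ↥(LinearMap.range π) = Module.finrank k C₁ := by
    rw [LinearMap.range_eq_top.mpr hπsurj]
    exact finrank_top k C₁
  have h3 : Module.finrank k ↥(LinearMap.ker π)
      = Module.finrank k ↥((LinearMap.ker f).map g) := by
    rw [← hrange, LinearMap.finrank_range_of_inj heinj]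
  omega

/-- Kernel of `rTensor` of a surjective map, over a field. -/
lemma aux_ker_rTensor {k M N Q : Type*} [Field k]
    [AddCommGroup M] [Module k M] [AddCommGroup N] [Module k N]
    [AddCommGroup Q] [Module k Q] (f : M →ₗ[k] N) (hf : Function.Surjective f) :
    LinearMap.ker (LinearMap.rTensor Q f)
      = LinearMap.range (LinearMap.rTensor Q (LinearMap.ker f).subtype) :=
  (rTensor_exact Q (LinearMap.exact_subtype_ker_map f) hf).linearMap_ker_eq

/-- `span 𝒜 ⊆ V₁ ⊗ (V₁·V₁)` (inside `V₁ ⊗ V₂`),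
and `dim span 𝒜 + b = a₁q₁₁`, i.e. `b = a₁q₁₁ − dim span 𝒜`. -/
theorem stmt_4 {k A : Type*} [Field k] [Ring A] [Algebra k A]
    (V₁ V₂ V₃ : Submodule k A)
    (hV11 : V₁ * V₁ ≤ V₂) (hV12 : V₁ * V₂ ≤ V₃)
    [FiniteDimensional k ↥V₁] [FiniteDimensional k ↥V₂] [FiniteDimensional k ↥V₃]
    [FiniteDimensional k ↥(V₁ * V₁)]
    (a₁ q₁₁ b : ℕ)
    (ha₁ : a₁ = Module.finrank k ↥V₁)
    (hq₁₁ : q₁₁ = Module.finrank k ↥(V₁ * V₁))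
    (φ₁ : ↥V₁ ⊗[k] ↥V₁ →ₗ[k] ↥V₂)
    (hφ₁ : ∀ x y : ↥V₁, (φ₁ (x ⊗ₜ[k] y) : A) = (x : A) * (y : A))
    (z : Module.Basis (Fin a₁) k ↥V₁)
    (p : Fin (a₁ ^ 2 - q₁₁) → Fin a₁ → ↥V₁)
    (hpind : LinearIndependent k (fun s : Fin (a₁ ^ 2 - q₁₁) => ∑ i, z i ⊗ₜ[k] p s i))
    (hpspan : Submodule.span k
        (Set.range (fun s : Fin (a₁ ^ 2 - q₁₁) => ∑ i, z i ⊗ₜ[k] p s i)) =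
      LinearMap.ker φ₁)
    (ψ : (↥V₁ ⊗[k] ↥V₁) ⊗[k] ↥V₁ →ₗ[k]
      (↥(V₁ * V₁) ⊗[k] ↥V₁) × (↥V₁ ⊗[k] ↥(V₁ * V₁)))
    (hψ : ∀ x y w : ↥V₁, ψ ((x ⊗ₜ[k] y) ⊗ₜ[k] w) =
      ((⟨(x : A) * (y : A), Submodule.mul_mem_mul x.2 y.2⟩ : ↥(V₁ * V₁)) ⊗ₜ[k] w,
        x ⊗ₜ[k] (⟨(y : A) * (w : A), Submodule.mul_mem_mul y.2 w.2⟩ : ↥(V₁ * V₁))))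
    (hb : b = Module.finrank k (ModQuot (k := k)
      (M := (↥(V₁ * V₁) ⊗[k] ↥V₁) × (↥V₁ ⊗[k] ↥(V₁ * V₁))) (LinearMap.range ψ))) :
    Submodule.span k (Set.range
        (fun js : Fin a₁ × Fin (a₁ ^ 2 - q₁₁) => ∑ i, z i ⊗ₜ[k]
          (⟨(p js.2 i : A) * (z js.1 : A),
            hV11 (Submodule.mul_mem_mul (p js.2 i).2 (z js.1).2)⟩ : ↥V₂))) ≤
      LinearMap.range (LinearMap.lTensor ↥V₁ (Submodule.inclusion hV11)) ∧
      SubmoduleDim (k := k) (M := ↥V₁ ⊗[k] ↥V₂)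
          (Submodule.span k (Set.range
            (fun js : Fin a₁ × Fin (a₁ ^ 2 - q₁₁) => ∑ i, z i ⊗ₜ[k]
              (⟨(p js.2 i : A) * (z js.1 : A),
                hV11 (Submodule.mul_mem_mul (p js.2 i).2 (z js.1).2)⟩ : ↥V₂)))) + b =
        a₁ * q₁₁ := by
  classical
  -- the multiplication map onto `V₁ * V₁`
  set μ : ↥V₁ ⊗[k] ↥V₁ →ₗ[k] ↥(V₁ * V₁) := Submodule.mulMap' V₁ V₁ with hμdef
  have hμ_tmul : ∀ x y : ↥V₁,
      μ (x ⊗ₜ[k] y) = ⟨(x : A) * (y : A), Submodule.mul_mem_mul x.2 y.2⟩ :=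
    fun x y => Subtype.ext rfl
  have hφeq : φ₁ = (Submodule.inclusion hV11) ∘ₗ μ :=
    TensorProduct.ext' fun x y => Subtype.ext (hφ₁ x y)
  have hkerμ : LinearMap.ker μ = LinearMap.ker φ₁ := by
    rw [hφeq]
    exact (LinearMap.ker_comp_of_ker_eq_bot μ
      (LinearMap.ker_eq_bot.mpr (Submodule.inclusion_injective hV11))).symm
  have hμsurj : Function.Surjective μ := Submodule.mulMap'_surjective V₁ V₁
  -- the two components of ψ
  set ψ₁ : (↥V₁ ⊗[k] ↥V₁) ⊗[k] ↥V₁ →ₗ[k] ↥(V₁ * V₁) ⊗[k] ↥V₁ :=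
    LinearMap.rTensor ↥V₁ μ with hψ₁def
  set ψ₂ : (↥V₁ ⊗[k] ↥V₁) ⊗[k] ↥V₁ →ₗ[k] ↥V₁ ⊗[k] ↥(V₁ * V₁) :=
    (LinearMap.lTensor ↥V₁ μ) ∘ₗ (TensorProduct.assoc k ↥V₁ ↥V₁ ↥V₁).toLinearMap
    with hψ₂def
  have hψ₂_tmul : ∀ x y w : ↥V₁, ψ₂ ((x ⊗ₜ[k] y) ⊗ₜ[k] w)
      = x ⊗ₜ[k] (⟨(y : A) * (w : A), Submodule.mul_mem_mul y.2 w.2⟩ : ↥(V₁ * V₁)) := by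
    intro x y w
    simp only [hψ₂def, LinearMap.comp_apply, LinearEquiv.coe_coe,
      TensorProduct.assoc_tmul, LinearMap.lTensor_tmul, hμ_tmul]
  have hψeq : ψ = ψ₁.prod ψ₂ := by
    apply TensorProduct.ext_threefold
    intro x y w
    rw [hψ x y w]
    refine Prod.ext ?_ ?_
    · show _ = ψ₁ ((x ⊗ₜ[k] y) ⊗ₜ[k] w)
      rw [hψ₁def, LinearMap.rTensor_tmul, hμ_tmul]
    · show _ = ψ₂ ((x ⊗ₜ[k] y) ⊗ₜ[k] w)
      rw [hψ₂_tmul]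
  have hψ₁surj : Function.Surjective ψ₁ := LinearMap.rTensor_surjective _ hμsurj
  -- the kernel elements
  set E : Fin (a₁ ^ 2 - q₁₁) → ↥V₁ ⊗[k] ↥V₁ := fun s => ∑ i, z i ⊗ₜ[k] p s i with hEdef
  have hEker : ∀ s, E s ∈ LinearMap.ker μ := by
    intro s
    rw [hkerμ, ← hpspan]
    exact Submodule.subset_span ⟨s, rfl⟩
  -- the generators inside `V₁ ⊗ (V₁*V₁)`
  set g' : Fin a₁ × Fin (a₁ ^ 2 - q₁₁) → ↥V₁ ⊗[k] ↥(V₁ * V₁) := fun js =>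
    ∑ i, z i ⊗ₜ[k] (⟨(p js.2 i : A) * (z js.1 : A),
      Submodule.mul_mem_mul (p js.2 i).2 (z js.1).2⟩ : ↥(V₁ * V₁)) with hg'def
  set T : Submodule k (↥V₁ ⊗[k] ↥(V₁ * V₁)) := Submodule.span k (Set.range g') with hTdef
  have hcomp : ∀ (s : Fin (a₁ ^ 2 - q₁₁)) (j : Fin a₁),
      ψ₂ (E s ⊗ₜ[k] z j) = g' (j, s) := by
    intro s j
    rw [hEdef, hg'def]
    simp only [TensorProduct.sum_tmul, map_sum]
    exact Finset.sum_congr rfl fun i _ => hψ₂_tmul (z i) (p s i) (z j)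
  -- Claim A : map ψ₂ (ker ψ₁) = T
  have hexact : LinearMap.ker ψ₁
      = LinearMap.range (LinearMap.rTensor ↥V₁ (LinearMap.ker μ).subtype) := by
    rw [hψ₁def]
    have h := aux_ker_rTensor (M := ↥V₁ ⊗[k] ↥V₁) (N := ↥(V₁ * V₁)) (Q := ↥V₁) μ hμsurj
    exact h
  have hkey : ∀ t ∈ Submodule.span k (Set.range E), ∀ j : Fin a₁,
      ψ₂ (t ⊗ₜ[k] z j) ∈ T := by
    intro t ht j
    induction ht using Submodule.span_induction with
    | mem x hx =>
      obtain ⟨s, rfl⟩ := hx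
      rw [hcomp s j]
      exact Submodule.subset_span ⟨(j, s), rfl⟩
    | zero => rw [TensorProduct.zero_tmul, map_zero]; exact T.zero_mem
    | add x y hx hy hx' hy' =>
      rw [TensorProduct.add_tmul, map_add]; exact T.add_mem hx' hy'
    | smul c x hx hx' =>
      rw [← TensorProduct.smul_tmul', map_smul]; exact T.smul_mem c hx'
  have hkey2 : ∀ t ∈ LinearMap.ker μ, ∀ w : ↥V₁, ψ₂ (t ⊗ₜ[k] w) ∈ T := by
    intro t ht w
    have htspan : t ∈ Submodule.span k (Set.range E) := by
      rw [hEdef]; rw [hpspan, ← hkerμ]; exact ht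
    rw [← Module.Basis.sum_repr z w]
    rw [TensorProduct.tmul_sum]
    rw [map_sum]
    refine Submodule.sum_mem _ fun j _ => ?_
    rw [TensorProduct.tmul_smul, map_smul]
    exact T.smul_mem _ (hkey t htspan j)
  have hclaimA : (LinearMap.ker ψ₁).map ψ₂ = T := by
    apply le_antisymm
    · rintro _ ⟨v, hv, rfl⟩
      rw [hexact] at hv
      obtain ⟨u, rfl⟩ := hv
      induction u using TensorProduct.induction_on with
      | zero => rw [map_zero, map_zero]; exact T.zero_mem
      | tmul t w =>
        rw [LinearMap.rTensor_tmul]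
        exact hkey2 t.1 t.2 w
      | add u v hu hv =>
        rw [map_add, map_add]; exact T.add_mem hu hv
    · rw [hTdef, Submodule.span_le]
      rintro _ ⟨js, rfl⟩
      refine ⟨E js.2 ⊗ₜ[k] z js.1, ?_, hcomp js.2 js.1⟩
      show ψ₁ (E js.2 ⊗ₜ[k] z js.1) = 0
      rw [hψ₁def, LinearMap.rTensor_tmul,
        LinearMap.mem_ker.mp (hEker js.2), TensorProduct.zero_tmul]
  -- the inclusion map
  set ι : ↥V₁ ⊗[k] ↥(V₁ * V₁) →ₗ[k] ↥V₁ ⊗[k] ↥V₂ :=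
    LinearMap.lTensor ↥V₁ (Submodule.inclusion hV11) with hιdef
  have hιinj : Function.Injective ι :=
    Module.Flat.lTensor_preserves_injective_linearMap _
      (Submodule.inclusion_injective hV11)
  have hιg : ∀ js, ι (g' js) = ∑ i, z i ⊗ₜ[k]
      (⟨(p js.2 i : A) * (z js.1 : A),
        hV11 (Submodule.mul_mem_mul (p js.2 i).2 (z js.1).2)⟩ : ↥V₂) := by
    intro js
    rw [hg'def, map_sum]
    refine Finset.sum_congr rfl fun i _ => ?_
    rw [hιdef, LinearMap.lTensor_tmul]
    congr 1
  -- Claim B : span 𝒜 = map ι T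
  have hclaimB : Submodule.span k (Set.range
      (fun js : Fin a₁ × Fin (a₁ ^ 2 - q₁₁) => ∑ i, z i ⊗ₜ[k]
        (⟨(p js.2 i : A) * (z js.1 : A),
          hV11 (Submodule.mul_mem_mul (p js.2 i).2 (z js.1).2)⟩ : ↥V₂)))
      = T.map ι := by
    rw [hTdef, Submodule.map_span, ← Set.range_comp]
    congr 1
    exact congrArg Set.range (funext fun js => (hιg js).symm)
  constructor
  · rw [hclaimB]
    rintro x ⟨y, _, rfl⟩
    exact ⟨y, rfl⟩
  · -- dimension count
    show Module.finrank k _ + b = a₁ * q₁₁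
    have hdim1 : Module.finrank k ↥(Submodule.span k (Set.range
        (fun js : Fin a₁ × Fin (a₁ ^ 2 - q₁₁) => ∑ i, z i ⊗ₜ[k]
          (⟨(p js.2 i : A) * (z js.1 : A),
            hV11 (Submodule.mul_mem_mul (p js.2 i).2 (z js.1).2)⟩ : ↥V₂))))
        = Module.finrank k ↥T := by
      rw [hclaimB]
      exact ((Submodule.equivMapOfInjective ι hιinj T).finrank_eq).symm
    have hrn : Module.finrank k (ModQuot (k := k)
          (M := (↥(V₁ * V₁) ⊗[k] ↥V₁) × (↥V₁ ⊗[k] ↥(V₁ * V₁))) (LinearMap.range ψ))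
        + Module.finrank k ↥(LinearMap.range ψ)
        = Module.finrank k ((↥(V₁ * V₁) ⊗[k] ↥V₁) × (↥V₁ ⊗[k] ↥(V₁ * V₁))) :=
      by
        have h := Submodule.finrank_quotient_add_finrank (R := k)
          (M := (↥(V₁ * V₁) ⊗[k] ↥V₁) × (↥V₁ ⊗[k] ↥(V₁ * V₁))) (LinearMap.range ψ)
        exact h
    have hrankψ : Module.finrank k ↥(LinearMap.range ψ)
        = Module.finrank k (↥(V₁ * V₁) ⊗[k] ↥V₁) + Module.finrank k ↥T := by
      rw [hψeq, aux_finrank_range_prod (M := (↥V₁ ⊗[k] ↥V₁) ⊗[k] ↥V₁)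
        (C₁ := ↥(V₁ * V₁) ⊗[k] ↥V₁) (C₂ := ↥V₁ ⊗[k] ↥(V₁ * V₁)) ψ₁ ψ₂ hψ₁surj, hclaimA]
    have hprod : Module.finrank k ((↥(V₁ * V₁) ⊗[k] ↥V₁) × (↥V₁ ⊗[k] ↥(V₁ * V₁)))
        = Module.finrank k (↥(V₁ * V₁) ⊗[k] ↥V₁)
          + Module.finrank k (↥V₁ ⊗[k] ↥(V₁ * V₁)) :=
      Module.finrank_prod
    have ht1 : Module.finrank k (↥V₁ ⊗[k] ↥(V₁ * V₁)) = a₁ * q₁₁ := by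
      rw [Module.finrank_tensorProduct, ha₁, hq₁₁]
    have hTle : Module.finrank k ↥T ≤ a₁ * q₁₁ := by
      rw [← ht1]
      exact Submodule.finrank_le T
    rw [hdim1, hb]
    omega
end

section
/- Let d ∈ ℤ⟦t⟧ be a power series with constant coefficient 1, and suppose the power series 𝒫 := (1+t)^n·α(t)^{−1} − (1+t)^n·d^{−1} has vanishing coefficients in degrees 0, 1 and 2. Writing 𝒫_i for the coefficient of t^i in 𝒫 and d_i for the coefficient of t^i in d, the following hold: d₁ = 0, d₂ = −a₁, d₃ = −a₂ + 𝒫₃, d₄ = −a₃ + 𝒫₄ − n·𝒫₃, and d₅ = −a₄ + 𝒫₅ − n·𝒫₄ + (n² − C(n,2) − 2a₁)·𝒫₃, where C(n,2) is the binomial coefficient. (Equivalently, d(t) = α(t) + 𝒫₃t³ + (𝒫₄ − n𝒫₃)t⁴ + (𝒫₅ − n𝒫₄ + (n² − C(n,2) − 2a₁)𝒫₃)t⁵ + f(t)t⁶ for some f ∈ ℤ⟦t⟧; in the Koszul setting, where 𝒫₃ = q₁₁, 𝒫₄ = (n+1)q₁₁ + q₁₂ and 𝒫₅ = (C(n+1,2)+2a₁)q₁₁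 + (n+1)q₁₂ + a − b, this yields d(t) = α(t) + q₁₁t³ + (q₁₁+q₁₂)t⁴ + (q₁₂ − b + a)t⁵ + f(t)t⁶, which is the content of Proposition 4.4.) -/
lemma coeff_one_add_X_pow' (n m : ℕ) :
    PowerSeries.coeff m ((1 + PowerSeries.X) ^ n) = (n.choose m : ℤ) := by
  have : ((1 + PowerSeries.X) ^ n : PowerSeries ℤ)
      = (((1 + Polynomial.X) ^ n : Polynomial ℤ) : PowerSeries ℤ) := by
    push_cast; ring
  rw [this, Polynomial.coeff_coe, Polynomial.coeff_one_add_X_pow]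

/-- Let `α(t) = 1 − ∑_{j≥1} a_j t^{j+1}` and let `d ∈ ℤ⟦t⟧` have
constant coefficient `1`. Suppose `𝒫 := (1+t)^n·α(t)⁻¹ − (1+t)^n·d⁻¹ = B − v`
(where `B * α = (1+t)^n` and `v * d = (1+t)^n`) has vanishing coefficients in degrees
`0`, `1`, `2`. Then `d₁ = 0`, `d₂ = −a₁`, `d₃ = −a₂ + 𝒫₃`, `d₄ = −a₃ + 𝒫₄ − n𝒫₃`, and
`d₅ = −a₄ + 𝒫₅ − n𝒫₄ + (n² − C(n,2) − 2a₁)𝒫₃`. -/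
theorem stmt_12 (n : ℕ) (a : ℕ → ℕ) (ha0 : a 0 = 0)
    (α B d v : PowerSeries ℤ)
    (hα0 : PowerSeries.coeff 0 α = 1)
    (hα1 : PowerSeries.coeff 1 α = 0)
    (hαm : ∀ m, 2 ≤ m → PowerSeries.coeff m α = -(a (m - 1) : ℤ))
    (hB : B * α = (1 + PowerSeries.X) ^ n)
    (hd0 : PowerSeries.constantCoeff d = 1)
    (hv : v * d = (1 + PowerSeries.X) ^ n)
    (hP0 : PowerSeries.coeff 0 (B - v) = 0)
    (hP1 : PowerSeries.coeff 1 (B - v) = 0)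
    (hP2 : PowerSeries.coeff 2 (B - v) = 0) :
    PowerSeries.coeff 1 d = 0 ∧
      PowerSeries.coeff 2 d = -(a 1 : ℤ) ∧
      PowerSeries.coeff 3 d = -(a 2 : ℤ) + PowerSeries.coeff 3 (B - v) ∧
      PowerSeries.coeff 4 d = -(a 3 : ℤ) + PowerSeries.coeff 4 (B - v) -
        (n : ℤ) * PowerSeries.coeff 3 (B - v) ∧
      PowerSeries.coeff 5 d = -(a 4 : ℤ) + PowerSeries.coeff 5 (B - v) -
        (n : ℤ) * PowerSeries.coeff 4 (B - v) +
        ((n : ℤ) ^ 2 - (n.choose 2 : ℤ) - 2 * (a 1 : ℤ)) *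
          PowerSeries.coeff 3 (B - v) := by
  have hα2 := hαm 2 (by norm_num); have hα3 := hαm 3 (by norm_num)
  have hα4 := hαm 4 (by norm_num); have hα5 := hαm 5 (by norm_num)
  norm_num at hα2 hα3 hα4 hα5
  have eB0 := congrArg (PowerSeries.coeff 0) hB
  have eB1 := congrArg (PowerSeries.coeff 1) hB
  have eB2 := congrArg (PowerSeries.coeff 2) hB
  have eB3 := congrArg (PowerSeries.coeff 3) hB
  have eB4 := congrArg (PowerSeries.coeff 4) hB
  have eB5 := congrArg (PowerSeries.coeff 5) hB
  have eV0 := congrArg (PowerSeries.coeff 0) hv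
  have eV1 := congrArg (PowerSeries.coeff 1) hv
  have eV2 := congrArg (PowerSeries.coeff 2) hv
  have eV3 := congrArg (PowerSeries.coeff 3) hv
  have eV4 := congrArg (PowerSeries.coeff 4) hv
  have eV5 := congrArg (PowerSeries.coeff 5) hv
  simp only [PowerSeries.coeff_mul, coeff_one_add_X_pow',
    Finset.Nat.sum_antidiagonal_eq_sum_range_succ_mk, Finset.sum_range_succ,
    Finset.sum_range_zero, hα0, hα1, hα2, hα3, hα4, hα5,
    PowerSeries.coeff_zero_eq_constantCoeff, hd0, Nat.choose_zero_right,
    Nat.choose_one_right, mul_one, mul_zero, zero_add, add_zero, mul_neg]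
    at eB0 eB1 eB2 eB3 eB4 eB5 eV0 eV1 eV2 eV3 eV4 eV5
  norm_num [hd0] at eB0 eB1 eB2 eB3 eB4 eB5 eV0 eV1 eV2 eV3 eV4 eV5
  rw [eB0] at eB2 eB3 eB4 eB5
  rw [eV0] at eV1 eV2 eV3 eV4 eV5
  simp only [map_sub] at hP0 hP1 hP2 ⊢
  set b1 := PowerSeries.coeff 1 B with hb1
  set b2 := PowerSeries.coeff 2 B with hb2
  set b3 := PowerSeries.coeff 3 B with hb3
  set b4 := PowerSeries.coeff 4 B with hb4
  set b5 := PowerSeries.coeff 5 B with hb5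
  set w1 := PowerSeries.coeff 1 v with hw1
  set w2 := PowerSeries.coeff 2 v with hw2
  set w3 := PowerSeries.coeff 3 v with hw3
  set w4 := PowerSeries.coeff 4 v with hw4
  set w5 := PowerSeries.coeff 5 v with hw5
  have k1 : PowerSeries.coeff 1 d = 0 := by
    linear_combination eV1 - eB1 + hP1
  have k2 : PowerSeries.coeff 2 d = -(a 1 : ℤ) := by
    linear_combination eV2 - eB2 + hP2 - w1 * k1
  have k3 : PowerSeries.coeff 3 d = -(a 2 : ℤ) + (b3 - w3) := by
    linear_combination eV3 - eB3 - w1 * k2 - w2 * k1 - (a 1 : ℤ) * hP1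
  have k4 : PowerSeries.coeff 4 d
      = -(a 3 : ℤ) + (b4 - w4) - (n : ℤ) * (b3 - w3) := by
    linear_combination eV4 - eB4 - w1 * k3 - w2 * k2 - w3 * k1
      - (a 2 : ℤ) * hP1 - (a 1 : ℤ) * hP2 - (b3 - w3) * (eB1 - hP1)
  have k5 : PowerSeries.coeff 5 d
      = -(a 4 : ℤ) + (b5 - w5) - (n : ℤ) * (b4 - w4)
        + ((n : ℤ) ^ 2 - (n.choose 2 : ℤ) - 2 * (a 1 : ℤ)) * (b3 - w3) := by
    linear_combination eV5 - eB5 - w1 * k4 - w2 * k3 - w3 * k2 - w4 * k1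
      - (a 3 : ℤ) * hP1 - (a 2 : ℤ) * hP2 - (b4 - w4) * (eB1 - hP1)
      + (n : ℤ) * (b3 - w3) * (eB1 - hP1) + (b3 - w3) * (hP2 - eB2)
  exact ⟨k1, k2, k3, k4, k5⟩
end
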